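/- Let C be a left proper model category and f, g : X → Y two maps that become equal in the homotopy category Ho(C). Then the restriction functors f*, g* : C^Y → C^X between under-categories induce naturally isomorphic left derived functors Lf* ≅ Lg* : Ho(C^Y) → Ho(C^X). In particular, Y with structure map f and Y with structure map g are isomorphic as objects of Ho(C^X). -/

import Mathlib

open CategoryTheory Limits

/-- A model structure on a category `C`: distinguished classes of weak equivalences,
cofibrations and fibrations, subject to the usual axioms (bicompleteness is assumed via
`HasFiniteLimits`/`HasFiniteColimits` type-class hypotheses at use sites). -/
class ModelStruct (C : Type*) [Category C] where
  W : MorphismProperty C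
  Cof : MorphismProperty C
  Fib : MorphismProperty C
  W_id : ∀ X : C, W (𝟙 X)
  Cof_id : ∀ X : C, Cof (𝟙 X)
  Fib_id : ∀ X : C, Fib (𝟙 X)
  /-- two-out-of-three -/
  W_comp : ∀ {X Y Z : C} (f : X ⟶ Y) (g : Y ⟶ Z), W f → W g → W (f ≫ g)
  W_cancel_left : ∀ {X Y Z : C} (f : X ⟶ Y) (g : Y ⟶ Z), W f → W (f ≫ g) → W g
  W_cancel_right : ∀ {X Y Z : C} (f : X ⟶ Y) (g : Y ⟶ Z), W g → W (f ≫ g) → W f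
  /-- the three classes are stable under retracts -/
  W_retract : ∀ {X Y X' Y' : C} (f : X ⟶ Y) (f' : X' ⟶ Y')
    (s : Arrow.mk f ⟶ Arrow.mk f') (r : Arrow.mk f' ⟶ Arrow.mk f),
    s ≫ r = 𝟙 (Arrow.mk f) → W f' → W f
  Cof_retract : ∀ {X Y X' Y' : C} (f : X ⟶ Y) (f' : X' ⟶ Y')
    (s : Arrow.mk f ⟶ Arrow.mk f') (r : Arrow.mk f' ⟶ Arrow.mk f),
    s ≫ r = 𝟙 (Arrow.mk f) → Cof f' → Cof f
  Fib_retract : ∀ {X Y X' Y' : C} (f : X ⟶ Y) (f' : X' ⟶ Y')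
    (s : Arrow.mk f ⟶ Arrow.mk f') (r : Arrow.mk f' ⟶ Arrow.mk f),
    s ≫ r = 𝟙 (Arrow.mk f) → Fib f' → Fib f
  /-- lifting axioms -/
  lift_acof_fib : ∀ {A B X Y : C} (i : A ⟶ B) (p : X ⟶ Y),
    Cof i → W i → Fib p → HasLiftingProperty i p
  lift_cof_afib : ∀ {A B X Y : C} (i : A ⟶ B) (p : X ⟶ Y),
    Cof i → Fib p → W p → HasLiftingProperty i p
  /-- factorization axioms -/
  fact_acof_fib : ∀ {X Y : C} (f : X ⟶ Y), ∃ (Z : C) (i : X ⟶ Z) (p : Z ⟶ Y),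
    Cof i ∧ W i ∧ Fib p ∧ i ≫ p = f
  fact_cof_afib : ∀ {X Y : C} (f : X ⟶ Y), ∃ (Z : C) (i : X ⟶ Z) (p : Z ⟶ Y),
    Cof i ∧ Fib p ∧ W p ∧ i ≫ p = f

/-- Left properness: the pushout of a weak equivalence along a cofibration is a weak
equivalence. -/
def LeftProper (C : Type*) [Category C] [M : ModelStruct C] : Prop :=
  ∀ {A B A' B' : C} (w : A ⟶ A') (i : A ⟶ B) (i' : A' ⟶ B') (w' : B ⟶ B'),
    M.W w → M.Cof i → IsPushout w i i' w' → M.W w'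

namespace Stmt15Aux

variable {C : Type*} [Category C] [M : ModelStruct C]

/-- Retract argument: a map having the left lifting property against all acyclic
fibrations is a cofibration. -/
lemma cof_of_llp {P Q : C} (f : P ⟶ Q)
    (h : ∀ {X Y : C} (p : X ⟶ Y), M.Fib p → M.W p → HasLiftingProperty f p) :
    M.Cof f := by
  obtain ⟨Z, i, p, hi, hp, hwp, hfac⟩ := M.fact_cof_afib f
  haveI := h p hp hwp
  have sq : CommSq i f p (𝟙 Q) := ⟨by simp [hfac]⟩
  have hl := sq.fac_left
  have hr := sq.fac_right
  refine M.Cof_retract f i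
    (Arrow.homMk (u := 𝟙 P) (v := sq.lift) (by simpa using hl.symm))
    (Arrow.homMk (u := 𝟙 P) (v := p) (by simpa using hfac.symm))
    ?_ hi
  · ext
    · simp
    · simpa using hr

omit M in
lemma llp_of_isPushout {A A' B B' X Y : C} {u : A ⟶ A'} {f : A ⟶ B} {f' : A' ⟶ B'}
    {u' : B ⟶ B'} (sq : IsPushout u f f' u') (p : X ⟶ Y) [HasLiftingProperty f p] :
    HasLiftingProperty f' p := by
  constructor
  intro a b sq'
  have sq2 : CommSq (u ≫ a) f p (u' ≫ b) := ⟨by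
    rw [Category.assoc, sq'.w, ← Category.assoc, sq.w, Category.assoc]⟩
  refine ⟨⟨{ l := sq.desc a sq2.lift (by rw [sq2.fac_left]), fac_left := ?_, fac_right := ?_ }⟩⟩
  · rw [sq.inl_desc]
  · apply sq.hom_ext
    · rw [← Category.assoc, sq.inl_desc, sq'.w]
    · rw [← Category.assoc, sq.inr_desc, sq2.fac_right]

lemma cof_of_isPushout {A A' B B' : C} {u : A ⟶ A'} {f : A ⟶ B} {f' : A' ⟶ B'}
    {u' : B ⟶ B'} (sq : IsPushout u f f' u') (hf : M.Cof f) : M.Cof f' := by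
  refine cof_of_llp f' fun p hp hwp => ?_
  haveI := M.lift_cof_afib f p hf hp hwp
  exact llp_of_isPushout sq p

lemma cof_comp {P Q R : C} {f : P ⟶ Q} {g : Q ⟶ R} (hf : M.Cof f) (hg : M.Cof g) :
    M.Cof (f ≫ g) := by
  refine cof_of_llp _ fun p hp hwp => ?_
  haveI := M.lift_cof_afib f p hf hp hwp
  haveI := M.lift_cof_afib g p hg hp hwp
  infer_instance


/-- A chosen (cofibration, acyclic fibration) factorization. -/
structure CAF {X Y : C} (f : X ⟶ Y) where
  Z : C
  i : X ⟶ Z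
  p : Z ⟶ Y
  cof : M.Cof i
  fib : M.Fib p
  we : M.W p
  fac : i ≫ p = f

noncomputable def caf {X Y : C} (f : X ⟶ Y) : CAF f :=
  Classical.choice (by
    obtain ⟨Z, i, p, hi, hp, hwp, hfac⟩ := M.fact_cof_afib f
    exact ⟨⟨Z, i, p, hi, hp, hwp, hfac⟩⟩)

/-- Chosen cofibrant replacement in the under category. -/
noncomputable def repl {U : C} (A : Under U) : Under U := Under.mk (caf A.hom).i

lemma repl_cof {U : C} (A : Under U) : M.Cof (repl A).hom := (caf A.hom).cof

noncomputable def replP {U : C} (A : Under U) : repl A ⟶ A :=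
  Under.homMk (caf A.hom).p (caf A.hom).fac

lemma replP_we {U : C} (A : Under U) : M.W (replP A).right := (caf A.hom).we

noncomputable def liftMap {U : C} {A B : Under U} (a : A ⟶ B) : repl A ⟶ repl B := by
  haveI := M.lift_cof_afib (caf A.hom).i (caf B.hom).p (caf A.hom).cof
    (caf B.hom).fib (caf B.hom).we
  have sq : CommSq (caf B.hom).i (caf A.hom).i (caf B.hom).p
      ((caf A.hom).p ≫ a.right) :=
    ⟨by rw [(caf B.hom).fac, ← Category.assoc, (caf A.hom).fac, Under.w]⟩
  exact Under.homMk sq.lift (by simp only [repl, Under.mk_hom]; rw [sq.fac_left])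

lemma liftMap_fac {U : C} {A B : Under U} (a : A ⟶ B) :
    liftMap a ≫ replP B = replP A ≫ a := by
  haveI := M.lift_cof_afib (caf A.hom).i (caf B.hom).p (caf A.hom).cof
    (caf B.hom).fib (caf B.hom).we
  ext
  refine CommSq.fac_right (hsq := ?_)
  exact this.sq_hasLift _

/-- A functor on an under category is good if it inverts weak equivalences between
cofibrant objects. -/
def Good {E : Type*} [Category E] (U : C) (T : Under U ⥤ E) : Prop :=
  ∀ {A B : Under U} (e : A ⟶ B), M.Cof A.hom → M.Cof B.hom → M.W e.right → IsIso (T.map e)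

variable [HasFiniteColimits C]

/-- Homotopy uniqueness of lifts: a good functor identifies any two maps between
cofibrant objects that are compatible with acyclic fibrations to `A` and `B`. -/
lemma good_map_eq {E : Type*} [Category E] {U : C} {T : Under U ⥤ E} (hT : Good U T)
    {A B RA RB : Under U} (a : A ⟶ B) (hRA : M.Cof RA.hom) (hRB : M.Cof RB.hom)
    (pA : RA ⟶ A) (pB : RB ⟶ B) (hpBf : M.Fib pB.right) (hpBw : M.W pB.right)
    (l₀ l₁ : RA ⟶ RB)
    (h₀ : l₀ ≫ pB = pA ≫ a) (h₁ : l₁ ≫ pB = pA ≫ a) :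
    T.map l₀ = T.map l₁ := by
  have hl0 : RA.hom ≫ l₀.right = RB.hom := Under.w l₀
  have hl1 : RA.hom ≫ l₁.right = RB.hom := Under.w l₁
  have hr0 : l₀.right ≫ pB.right = pA.right ≫ a.right := by
    have h := congrArg CommaMorphism.right h₀; simpa using h
  have hr1 : l₁.right ≫ pB.right = pA.right ≫ a.right := by
    have h := congrArg CommaMorphism.right h₁; simpa using h
  let iA := RA.hom
  let nabla : pushout iA iA ⟶ RA.right := pushout.desc (𝟙 _) (𝟙 _) rfl
  obtain ⟨Cyl, c, sigma, hc, _, hsigmaw, facc⟩ := caf (M := M) nabla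
  have hinl : M.Cof (pushout.inl iA iA) :=
    cof_of_isPushout (IsPushout.of_hasPushout iA iA) hRA
  -- objects and maps in the under category
  let CylU : Under U := Under.mk (iA ≫ pushout.inl iA iA ≫ c)
  have hCylCof : M.Cof CylU.hom := cof_comp (M := M) hRA (cof_comp (M := M) hinl hc)
  let i0 : RA ⟶ CylU := Under.homMk (pushout.inl iA iA ≫ c) rfl
  let i1 : RA ⟶ CylU := Under.homMk (pushout.inr iA iA ≫ c) (by
    simp only [CylU, Under.mk_hom, ← Category.assoc, pushout.condition]; rfl)
  let sigmaU : CylU ⟶ RA := Under.homMk sigma (by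
    simp only [CylU, Under.mk_hom, Category.assoc, facc]
    simp [nabla, iA]; rw [pushout.inl_desc, Category.comp_id])
  have hi0sigma : i0 ≫ sigmaU = 𝟙 RA := by
    ext
    simp only [i0, sigmaU, Under.comp_right, Under.homMk_right, Category.assoc, facc,
      Under.id_right]
    simp [nabla]
    exact pushout.inl_desc _ _ _
  have hi1sigma : i1 ≫ sigmaU = 𝟙 RA := by
    ext
    simp only [i1, sigmaU, Under.comp_right, Under.homMk_right, Category.assoc, facc,
      Under.id_right]
    simp [nabla]
    exact pushout.inr_desc _ _ _
  -- the homotopy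
  haveI := M.lift_cof_afib c pB.right hc hpBf hpBw
  have sq : CommSq (pushout.desc l₀.right l₁.right (hl0.trans hl1.symm)) c pB.right
      (sigma ≫ pA.right ≫ a.right) := ⟨by
    apply pushout.hom_ext
    · simp only [← Category.assoc]
      rw [pushout.inl_desc, Category.assoc (pushout.inl iA iA) c sigma, facc]
      simp [nabla, hr0]
      rw [← Category.assoc, pushout.inl_desc, Category.id_comp]
    · simp only [← Category.assoc]
      rw [pushout.inr_desc, Category.assoc (pushout.inr iA iA) c sigma, facc]
      simp [nabla, hr1]
      rw [← Category.assoc, pushout.inr_desc, Category.id_comp]⟩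
  let HU : CylU ⟶ RB := Under.homMk sq.lift (by
    simp only [CylU, Under.mk_hom, Category.assoc, sq.fac_left]
    rw [pushout.inl_desc, hl0])
  have hH0 : i0 ≫ HU = l₀ := by
    ext
    simp only [i0, HU, Under.comp_right, Under.homMk_right, Category.assoc, sq.fac_left]
    rw [pushout.inl_desc]
  have hH1 : i1 ≫ HU = l₁ := by
    ext
    simp only [i1, HU, Under.comp_right, Under.homMk_right, Category.assoc, sq.fac_left]
    rw [pushout.inr_desc]
  -- conclude
  haveI hsig : IsIso (T.map sigmaU) := hT sigmaU hCylCof hRA hsigmaw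
  have h01 : T.map i0 = T.map i1 := by
    rw [← cancel_mono (T.map sigmaU), ← T.map_comp, ← T.map_comp, hi0sigma, hi1sigma]
  rw [← hH0, ← hH1, T.map_comp, T.map_comp, h01]


lemma replP_fib {U : C} (A : Under U) : M.Fib (replP A).right := (caf A.hom).fib

/-- The replacement functor relative to a good functor `T`. -/
noncomputable def hatF {E : Type*} [Category E] {U : C} (T : Under U ⥤ E) (hT : Good U T) :
    Under U ⥤ E where
  obj A := T.obj (repl A)
  map a := T.map (liftMap a)
  map_id A := by
    rw [good_map_eq hT (𝟙 A) (repl_cof A) (repl_cof A) (replP A) (replP A) (replP_fib A)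
      (replP_we A) (liftMap (𝟙 A)) (𝟙 (repl A)) (liftMap_fac _) (by simp), T.map_id]
  map_comp {A B D} a b := by
    rw [← T.map_comp]
    exact good_map_eq hT (a ≫ b) (repl_cof A) (repl_cof D) (replP A) (replP D) (replP_fib D)
      (replP_we D) _ _ (liftMap_fac _)
      (by rw [Category.assoc, liftMap_fac, ← Category.assoc, liftMap_fac, Category.assoc])

/-- The natural transformation from the replacement functor to `T`. -/
noncomputable def hatPi {E : Type*} [Category E] {U : C} (T : Under U ⥤ E) (hT : Good U T) :
    hatF T hT ⟶ T where
  app A := T.map (replP A)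
  naturality A B a := by
    dsimp [hatF]
    rw [← T.map_comp, liftMap_fac, T.map_comp]

/-- Whiskering a natural transformation through the replacement. -/
noncomputable def hatMap {E : Type*} [Category E] {U : C} {T T' : Under U ⥤ E}
    (hT : Good U T) (hT' : Good U T') (θ : T ⟶ T') : hatF T hT ⟶ hatF T' hT' where
  app A := θ.app (repl A)
  naturality A B a := θ.naturality (liftMap a)

lemma hatF_comp {E E' : Type*} [Category E] [Category E'] {U : C} (T : Under U ⥤ E)
    (hT : Good U T) (S : E ⥤ E') (hTS : Good U (T ⋙ S)) :
    hatF T hT ⋙ S = hatF (T ⋙ S) hTS := rfl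

lemma hatF_congr {E : Type*} [Category E] {U : C} {T T' : Under U ⥤ E} (h : T = T')
    (hT : Good U T) (hT' : Good U T') : hatF T hT = hatF T' hT' := by subst h; rfl

section Pushforward

variable {U V : C} (w : U ⟶ V)

lemma unit_right (A : Under U) :
    ((Under.mapPushoutAdj w).unit.app A).right = pushout.inl A.hom w := by
  simp [Under.mapPushoutAdj]
  exact Category.comp_id _

lemma unit_we (hproper : LeftProper C) (hw : M.W w) (A : Under U) (hA : M.Cof A.hom) :
    M.W ((Under.mapPushoutAdj w).unit.app A).right := by
  rw [unit_right]
  exact hproper w A.hom (pushout.inr A.hom w) (pushout.inl A.hom w) hw hA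
    (IsPushout.of_hasPushout A.hom w).flip

lemma map_right {A B : Under V} (e : A ⟶ B) : ((Under.map w).map e).right = e.right := rfl

lemma pushout_map_we (hproper : LeftProper C) (hw : M.W w) {A B : Under U} (e : A ⟶ B)
    (hA : M.Cof A.hom) (hB : M.Cof B.hom) (he : M.W e.right) :
    M.W ((Under.pushout w).map e).right := by
  have hnat := (Under.mapPushoutAdj w).unit.naturality e
  have hr := congrArg CommaMorphism.right hnat
  simp only [Under.comp_right, Functor.id_map, Functor.comp_map] at hr
  have h1 : M.W (e.right ≫ ((Under.mapPushoutAdj w).unit.app B).right) :=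
    M.W_comp _ _ he (unit_we w hproper hw B hB)
  rw [hr] at h1
  exact M.W_cancel_left _ _ (unit_we w hproper hw A hA) h1

end Pushforward

section Loc

/-- The weak equivalences of the under category. -/
abbrev WU (U : C) : MorphismProperty (Under U) := M.W.inverseImage (Under.forget U)

lemma liftMap_we {U : C} {A B : Under U} (a : A ⟶ B) (ha : M.W a.right) :
    M.W (liftMap a).right := by
  have h := congrArg CommaMorphism.right (liftMap_fac a)
  simp only [Under.comp_right] at h
  have h1 : M.W ((replP A).right ≫ a.right) := M.W_comp _ _ (replP_we A) ha
  rw [← h] at h1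
  exact M.W_cancel_right _ _ (replP_we B) h1

lemma good_comp {E E' : Type*} [Category E] [Category E'] {U : C} {T : Under U ⥤ E}
    (hT : Good U T) (S : E ⥤ E') : Good U (T ⋙ S) := by
  intro A B e hA hB he
  haveI := hT e hA hB he
  dsimp
  infer_instance

lemma goodQ (U : C) : Good U ((WU U).Q) :=
  fun e _ _ he => Localization.inverts (WU U).Q (WU U) e he

lemma hatF_inverts {E : Type*} [Category E] {U : C} {T : Under U ⥤ E} (hT : Good U T) :
    (WU U).IsInvertedBy (hatF T hT) := fun A B a ha =>
  hT (liftMap a) (repl_cof A) (repl_cof B) (liftMap_we a ha)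

variable {U V : C} (h : U ⟶ V)

lemma mapW_inverts : (WU V).IsInvertedBy (Under.map h ⋙ (WU U).Q) := fun A B e he =>
  Localization.inverts (WU U).Q (WU U) ((Under.map h).map e) he

/-- The restriction functor between localizations of under categories. -/
noncomputable def resF : (WU V).Localization ⥤ (WU U).Localization :=
  Localization.Construction.lift (Under.map h ⋙ (WU U).Q) (mapW_inverts h)

lemma res_fac : (WU V).Q ⋙ resF h = Under.map h ⋙ (WU U).Q :=
  Localization.Construction.fac _ _

section Inverse

variable {U V : C}

lemma goodPushQ (hproper : LeftProper C) (w : U ⟶ V) (hw : M.W w) :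
    Good U (Under.pushout w ⋙ (WU V).Q) :=
  fun e hA hB he => Localization.inverts (WU V).Q (WU V) _
    (pushout_map_we w hproper hw e hA hB he)

/-- The derived pushforward. -/
noncomputable def GInv (hproper : LeftProper C) (w : U ⟶ V) (hw : M.W w) : (WU U).Localization ⥤ (WU V).Localization :=
  Localization.Construction.lift (hatF (Under.pushout w ⋙ (WU V).Q) (goodPushQ hproper w hw))
    (hatF_inverts _)

/-- The counit comparison. -/
noncomputable def deltaT (hproper : LeftProper C) (w : U ⟶ V) (hw : M.W w) :
    (Under.map w ⋙ hatF (Under.pushout w ⋙ (WU V).Q) (goodPushQ hproper w hw)) ⟶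
      (WU V).Q where
  app B := (WU V).Q.map ((Under.pushout w).map (replP ((Under.map w).obj B)) ≫
      (Under.mapPushoutAdj w).counit.app B)
  naturality B B' b := by
    have hUnder : (Under.pushout w).map (liftMap ((Under.map w).map b)) ≫
        ((Under.pushout w).map (replP ((Under.map w).obj B')) ≫
          (Under.mapPushoutAdj w).counit.app B') =
        ((Under.pushout w).map (replP ((Under.map w).obj B)) ≫
          (Under.mapPushoutAdj w).counit.app B) ≫ b := by
      rw [← Category.assoc, ← Functor.map_comp, liftMap_fac, Functor.map_comp,
        Category.assoc, Category.assoc]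
      congr 1
      simpa using (Under.mapPushoutAdj w).counit.naturality b
    rw [show (Under.map w ⋙ hatF (Under.pushout w ⋙ (WU V).Q) (goodPushQ hproper w hw)).map b =
      (WU V).Q.map ((Under.pushout w).map (liftMap ((Under.map w).map b))) from rfl,
      ]
    exact ((WU V).Q.map_comp _ _).symm.trans ((congrArg (WU V).Q.map hUnder).trans ((WU V).Q.map_comp _ _))

lemma deltaT_app_isIso (hproper : LeftProper C) (w : U ⟶ V) (hw : M.W w) (B : Under V) : IsIso ((deltaT hproper w hw).app B) := by
  set A0 := (Under.map w).obj B
  set cB := (Under.pushout w).map (replP A0) ≫ (Under.mapPushoutAdj w).counit.app B with hcB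
  have key : (Under.mapPushoutAdj w).unit.app (repl A0) ≫ (Under.map w).map cB = replP A0 := by
    rw [hcB, (Under.map w).map_comp, ← Category.assoc]
    have hnat := (Under.mapPushoutAdj w).unit.naturality (replP A0)
    simp only [Functor.id_map, Functor.comp_map] at hnat
    rw [← hnat, Category.assoc]
    have := (Under.mapPushoutAdj w).right_triangle_components B
    rw [this]
    simp
    exact Category.comp_id _
  have keyr := congrArg CommaMorphism.right key
  simp only [Under.comp_right] at keyr
  have hWcB : M.W cB.right := by
    apply M.W_cancel_left _ _ (unit_we w hproper hw (repl A0) (repl_cof A0))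
    rw [show ((Under.map w).map cB).right = cB.right from rfl] at keyr
    exact keyr ▸ replP_we A0
  exact Localization.inverts (WU V).Q (WU V) cB hWcB

/-- The composite `resF w ⋙ GInv` is isomorphic to the identity. -/
noncomputable def isoA (hproper : LeftProper C) (w : U ⟶ V) (hw : M.W w) : resF w ⋙ GInv hproper w hw ≅ 𝟭 ((WU V).Localization) := by
  haveI : Localization.Lifting (WU V).Q (WU V)
      (Under.map w ⋙ hatF (Under.pushout w ⋙ (WU V).Q) (goodPushQ hproper w hw))
      (resF w ⋙ GInv hproper w hw) := ⟨eqToIso (by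
    calc (WU V).Q ⋙ (resF w ⋙ GInv hproper w hw)
        = ((WU V).Q ⋙ resF w) ⋙ GInv hproper w hw := rfl
      _ = (Under.map w ⋙ (WU U).Q) ⋙ GInv hproper w hw := by rw [res_fac]
      _ = Under.map w ⋙ ((WU U).Q ⋙ GInv hproper w hw) := rfl
      _ = _ := congrArg (Under.map w ⋙ ·) (Localization.Construction.fac _ _))⟩
  haveI : ∀ B, IsIso ((deltaT hproper w hw).app B) := deltaT_app_isIso hproper w hw
  haveI : IsIso (deltaT hproper w hw) := NatIso.isIso_of_isIso_app _
  exact Localization.liftNatIso (WU V).Q (WU V)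
    (Under.map w ⋙ hatF (Under.pushout w ⋙ (WU V).Q) (goodPushQ hproper w hw)) ((WU V).Q)
    (resF w ⋙ GInv hproper w hw) (𝟭 _) (asIso (deltaT hproper w hw))

/-- The composite `GInv ⋙ resF w` is isomorphic to the identity. -/
noncomputable def isoB (hproper : LeftProper C) (w : U ⟶ V) (hw : M.W w) : GInv hproper w hw ⋙ resF w ≅ 𝟭 ((WU U).Localization) := by
  have hEq : (Under.pushout w ⋙ (WU V).Q) ⋙ resF w =
      Under.pushout w ⋙ Under.map w ⋙ (WU U).Q := by
    calc (Under.pushout w ⋙ (WU V).Q) ⋙ resF w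
        = Under.pushout w ⋙ ((WU V).Q ⋙ resF w) := rfl
      _ = _ := by rw [res_fac]
  have good3 : Good U (Under.pushout w ⋙ Under.map w ⋙ (WU U).Q) := by
    rw [← hEq]; exact good_comp (goodPushQ hproper w hw) _
  -- the unit comparison
  let theta : (WU U).Q ⟶ Under.pushout w ⋙ Under.map w ⋙ (WU U).Q :=
    Functor.whiskerRight (Under.mapPushoutAdj w).unit (WU U).Q
  let hth : hatF ((WU U).Q) (goodQ U) ⟶ hatF _ good3 := hatMap (goodQ U) good3 theta
  haveI : ∀ A, IsIso (hth.app A) := by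
    intro A
    have : IsIso ((WU U).Q.map ((Under.mapPushoutAdj w).unit.app (repl A))) :=
      Localization.inverts (WU U).Q (WU U) _ (unit_we w hproper hw (repl A) (repl_cof A))
    exact this
  haveI : IsIso hth := NatIso.isIso_of_isIso_app _
  haveI : ∀ A, IsIso ((hatPi ((WU U).Q) (goodQ U)).app A) := fun A =>
    Localization.inverts (WU U).Q (WU U) _ (replP_we A)
  haveI : IsIso (hatPi ((WU U).Q) (goodQ U)) := NatIso.isIso_of_isIso_app _
  have e : (hatF (Under.pushout w ⋙ (WU V).Q) (goodPushQ hproper w hw) ⋙ resF w) ≅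
      (WU U).Q := by
    refine eqToIso ?_ ≪≫ (asIso hth).symm ≪≫ asIso (hatPi ((WU U).Q) (goodQ U))
    rw [hatF_comp _ _ _ (good_comp (goodPushQ hproper w hw) (resF w))]
    exact hatF_congr hEq _ _
  haveI : Localization.Lifting (WU U).Q (WU U)
      (hatF (Under.pushout w ⋙ (WU V).Q) (goodPushQ hproper w hw) ⋙ resF w)
      (GInv hproper w hw ⋙ resF w) := ⟨eqToIso (by
    calc (WU U).Q ⋙ (GInv hproper w hw ⋙ resF w)
        = ((WU U).Q ⋙ GInv hproper w hw) ⋙ resF w := rfl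
      _ = _ := congrArg (· ⋙ resF w) (Localization.Construction.fac _ _))⟩
  exact Localization.liftNatIso (WU U).Q (WU U)
    (hatF (Under.pushout w ⋙ (WU V).Q) (goodPushQ hproper w hw) ⋙ resF w) ((WU U).Q)
    (GInv hproper w hw ⋙ resF w) (𝟭 _) e

end Inverse

end Loc

/-- Functors up to isomorphism. -/
def isoSetoid (A B : Type*) [Category A] [Category B] : Setoid (A ⥤ B) where
  r F G := Nonempty (F ≅ G)
  iseqv := ⟨fun F => ⟨Iso.refl F⟩, fun ⟨e⟩ => ⟨e.symm⟩, fun ⟨e⟩ ⟨e'⟩ => ⟨e ≪≫ e'⟩⟩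

variable (C) in
/-- Objects of an auxiliary category whose morphisms `U ⟶ V` are isomorphism classes
of functors between the homotopy categories of the under categories (contravariantly). -/
structure DObj where
  as : C

noncomputable instance : Category (DObj C) where
  Hom U V := Quotient (isoSetoid ((WU V.as).Localization) ((WU U.as).Localization))
  id U := ⟦𝟭 _⟧
  comp {U V W'} φ ψ := Quotient.liftOn₂ φ ψ (fun F G => ⟦G ⋙ F⟧) (by
    rintro F G F' G' ⟨e⟩ ⟨e'⟩
    exact Quotient.sound ⟨Functor.isoWhiskerRight e' F ≪≫ Functor.isoWhiskerLeft G' e⟩)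
  id_comp {U V} φ := by
    induction φ using Quotient.ind
    exact Quotient.sound ⟨Functor.rightUnitor _⟩
  comp_id {U V} φ := by
    induction φ using Quotient.ind
    exact Quotient.sound ⟨Functor.leftUnitor _⟩
  assoc {U V W' K} φ ψ χ := by
    induction φ using Quotient.ind
    induction ψ using Quotient.ind
    induction χ using Quotient.ind
    exact Quotient.sound ⟨(Functor.associator _ _ _).symm⟩

variable (C) in
/-- The functor sending an object to the homotopy category of its under category. -/
noncomputable def HtoD : C ⥤ DObj C where
  obj U := ⟨U⟩
  map {U V} h := ⟦resF h⟧
  map_id U := by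
    refine Quotient.sound ⟨?_⟩
    haveI : Localization.Lifting (WU U).Q (WU U) (Under.map (𝟙 U) ⋙ (WU U).Q)
      (resF (𝟙 U)) := ⟨eqToIso (res_fac _)⟩
    exact Localization.liftNatIso (WU U).Q (WU U) (Under.map (𝟙 U) ⋙ (WU U).Q) ((WU U).Q)
      (resF (𝟙 U)) (𝟭 _)
      (Functor.isoWhiskerRight (Under.mapId U) ((WU U).Q) ≪≫ Functor.leftUnitor _)
  map_comp {U V K} h k := by
    refine Quotient.sound ⟨?_⟩
    haveI : Localization.Lifting (WU K).Q (WU K) (Under.map (h ≫ k) ⋙ (WU U).Q)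
      (resF (h ≫ k)) := ⟨eqToIso (res_fac _)⟩
    haveI : Localization.Lifting (WU K).Q (WU K) (Under.map (h ≫ k) ⋙ (WU U).Q)
        (resF k ⋙ resF h) := ⟨by
      refine eqToIso ?_ ≪≫ Functor.isoWhiskerRight (Under.mapComp h k).symm ((WU U).Q)
      calc (WU K).Q ⋙ (resF k ⋙ resF h) = ((WU K).Q ⋙ resF k) ⋙ resF h := rfl
        _ = (Under.map k ⋙ (WU V).Q) ⋙ resF h := by rw [res_fac]
        _ = Under.map k ⋙ ((WU V).Q ⋙ resF h) := rfl
        _ = Under.map k ⋙ Under.map h ⋙ (WU U).Q := by rw [res_fac]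
        _ = (Under.map k ⋙ Under.map h) ⋙ (WU U).Q := rfl⟩
    exact Localization.liftNatIso (WU K).Q (WU K) (Under.map (h ≫ k) ⋙ (WU U).Q)
      (Under.map (h ≫ k) ⋙ (WU U).Q) (resF (h ≫ k)) (resF k ⋙ resF h) (Iso.refl _)

lemma HtoD_inverts (hproper : LeftProper C) : M.W.IsInvertedBy (HtoD C) := by
  intro U V w hw
  exact ⟨⟦GInv hproper w hw⟧,
    Quotient.sound ⟨isoB hproper w hw⟩,
    Quotient.sound ⟨isoA hproper w hw⟩⟩

/-- The main construction: maps that are equal in the homotopy category induce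
isomorphic localized restriction functors. -/
lemma main_iso (hproper : LeftProper C) {X Y : C} (f g : X ⟶ Y)
    (hfg : M.W.Q.map f = M.W.Q.map g) :
    Nonempty (Under.map f ⋙ (WU X).Q ≅ Under.map g ⋙ (WU X).Q) := by
  have hinv : M.W.IsInvertedBy (HtoD C) := HtoD_inverts hproper
  have hfac : M.W.Q ⋙ Localization.Construction.lift (HtoD C) hinv = HtoD C :=
    Localization.Construction.fac _ _
  have h1 : (HtoD C).map f = (HtoD C).map g := by
    rw [← hfac]
    show (Localization.Construction.lift (HtoD C) hinv).map (M.W.Q.map f) =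
      (Localization.Construction.lift (HtoD C) hinv).map (M.W.Q.map g)
    rw [hfg]
  obtain ⟨e⟩ := Quotient.exact h1
  exact ⟨eqToIso (res_fac f).symm ≪≫ Functor.isoWhiskerLeft ((WU Y).Q) e ≪≫ eqToIso (res_fac g)⟩

end Stmt15Aux

/-- Let `C` be a left proper model category and `f, g : X ⟶ Y` maps that become equal
in `Ho(C)`. Then any right Kan extensions `Lf*`, `Lg* : Ho(C^Y) ⥤ Ho(C^X)` of the
localized restriction functors along the localizations (i.e. the total left derived
functors of the restrictions `f*, g* : C^Y ⥤ C^X` between under-categories) are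
isomorphic; in particular `(Y, f)` and `(Y, g)` become isomorphic in `Ho(C^X)`. -/
theorem stmt15 (C : Type*) [Category C] [M : ModelStruct C]
    [HasFiniteLimits C] [HasFiniteColimits C]
    (hproper : LeftProper C)
    {X Y : C} (f g : X ⟶ Y)
    (hfg : M.W.Q.map f = M.W.Q.map g)
    (Lf Lg : (M.W.inverseImage (Under.forget Y)).Localization ⥤
      (M.W.inverseImage (Under.forget X)).Localization)
    (αf : (M.W.inverseImage (Under.forget Y)).Q ⋙ Lf ⟶
      Under.map f ⋙ (M.W.inverseImage (Under.forget X)).Q)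
    (αg : (M.W.inverseImage (Under.forget Y)).Q ⋙ Lg ⟶
      Under.map g ⋙ (M.W.inverseImage (Under.forget X)).Q)
    [Lf.IsRightKanExtension αf] [Lg.IsRightKanExtension αg] :
    Nonempty (Lf ≅ Lg) ∧
    Nonempty ((M.W.inverseImage (Under.forget X)).Q.obj (Under.mk f) ≅
      (M.W.inverseImage (Under.forget X)).Q.obj (Under.mk g)) := by
  obtain ⟨Φ⟩ := Stmt15Aux.main_iso hproper f g hfg
  constructor
  · exact ⟨Lf.rightKanExtensionUniqueOfIso αf Φ Lg αg⟩
  · refine ⟨?_⟩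
    have h2 := Φ.app (Under.mk (𝟙 Y))
    have i1 : Under.mk f ≅ (Under.map f).obj (Under.mk (𝟙 Y)) :=
      Under.isoMk (Iso.refl _) (by simp)
    have i2 : Under.mk g ≅ (Under.map g).obj (Under.mk (𝟙 Y)) :=
      Under.isoMk (Iso.refl _) (by simp)
    exact ((M.W.inverseImage (Under.forget X)).Q.mapIso i1) ≪≫ h2 ≪≫
      ((M.W.inverseImage (Under.forget X)).Q.mapIso i2).symm
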